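/- For every α in the range of d₀⁻¹ one has P(d₀⁻¹(d α)) = α; i.e. the operator P := Σ_{k=0}^{N} (−1)^k D^k is an inverse of d₀⁻¹ ∘ d on the range of d₀⁻¹. -/

import Mathlib

/-- The operator `P := Σ_{k=0}^{N} (−1)^k D^k` inverts `d₀⁻¹ ∘ d`
on the range of `d₀⁻¹`. -/
theorem P_is_inverse_of_partialInverse_comp_d_on_range
    {V : Type*} [NormedAddCommGroup V] [InnerProductSpace ℝ V] [FiniteDimensional ℝ V]
    (d₀ dinv : V →ₗ[ℝ] V) (hd₀ : d₀ ∘ₗ d₀ = 0)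
    (hpinv₁ : (LinearMap.range d₀)ᗮ ≤ LinearMap.ker dinv)
    (hpinv₂ : LinearMap.range dinv ≤ (LinearMap.ker d₀)ᗮ)
    (hpinv₃ : ∀ v : V, d₀ (dinv v) = (Submodule.orthogonalProjectionOnto (LinearMap.range d₀) v : V))
    (d : V →ₗ[ℝ] V) (hd : d ∘ₗ d = 0)
    (D : V →ₗ[ℝ] V) (hD : D = dinv ∘ₗ (d - d₀))
    (N : ℕ) (hDnil : D ^ (N + 1) = 0)
    (P : V →ₗ[ℝ] V) (hP : P = ∑ k ∈ Finset.range (N + 1), ((-1 : ℝ)) ^ k • D ^ k) :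
    ∀ α ∈ LinearMap.range dinv, P (dinv (d α)) = α := by
  -- dinv ∘ d₀ ∘ dinv = dinv
  have hdd : ∀ v : V, dinv (d₀ (dinv v)) = dinv v := by
    intro v
    have hmem : v - (Submodule.orthogonalProjectionOnto (LinearMap.range d₀) v : V) ∈ (LinearMap.range d₀)ᗮ :=
      Submodule.sub_starProjection_mem_orthogonal v
    have h0 : dinv (v - (Submodule.orthogonalProjectionOnto (LinearMap.range d₀) v : V)) = 0 := hpinv₁ hmem
    rw [map_sub, sub_eq_zero] at h0
    rw [hpinv₃]
    exact h0.symm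
  -- P is the geometric series in -D
  have hx : P = ∑ k ∈ Finset.range (N + 1), (-D) ^ k := by
    rw [hP]
    refine Finset.sum_congr rfl fun k _ => ?_
    rw [← neg_one_smul ℝ D, smul_pow]
  have hnil : (-D) ^ (N + 1) = 0 := by
    rw [← neg_one_smul ℝ D, smul_pow, hDnil, smul_zero]
  have hg := geom_sum_mul (-D) (N + 1)
  rw [hnil, zero_sub] at hg
  have hmul : P * (1 + D) = 1 := by
    have : P * (1 + D) = -((∑ k ∈ Finset.range (N + 1), (-D) ^ k) * (-D - 1)) := by
      rw [hx]; noncomm_ring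
    rw [this, hg, neg_neg]
  rintro α ⟨v, rfl⟩
  have h1 : dinv (d (dinv v)) = dinv v + D (dinv v) := by
    rw [hD]
    simp only [LinearMap.comp_apply, LinearMap.sub_apply, map_sub, hdd]
    abel
  rw [h1]
  have h2 : P (dinv v + D (dinv v)) = (P * (1 + D)) (dinv v) := by
    simp [Module.End.mul_apply, LinearMap.add_apply]
  rw [h2, hmul, Module.End.one_apply]
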